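/- Let Q : [0,1] → ℝ be C¹ with Q'(u) > 0 for all u ∈ [0,1], and let h_t → h uniformly with h continuous on [0,1]. Let (Q + t·h_t)* denote the increasing rearrangement of Q + t·h_t. Then, uniformly in u on compact subsets of (0,1), ((Q + t·h_t)*(u) − Q(u))/t → h(u) as t → 0⁺; i.e., when the base function is strictly increasing, the Hadamard derivative of the rearrangement operator is the identity. -/

import Mathlib

open MeasureTheory Set Filter Topology

/-- Distribution function of `Q(U)`, `U` uniform on `[0,1]`. -/
noncomputable def distF (Q : ℝ → ℝ) (y : ℝ) : ℝ :=
  (volume {u ∈ Set.Icc (0:ℝ) 1 | Q u ≤ y}).toReal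

/-- Increasing (monotone) rearrangement of `Q`: the quantile function of `distF Q`. -/
noncomputable def rearr (Q : ℝ → ℝ) (u : ℝ) : ℝ :=
  sInf {y : ℝ | u ≤ distF Q y}

lemma distF_le {G F : ℝ → ℝ} (hle : ∀ v ∈ Set.Icc (0:ℝ) 1, G v ≤ F v) (y : ℝ) :
    distF F y ≤ distF G y := by
  have hsub : {v ∈ Set.Icc (0:ℝ) 1 | F v ≤ y} ⊆ {v ∈ Set.Icc (0:ℝ) 1 | G v ≤ y} :=
    fun v hv => ⟨hv.1, (hle v hv.1).trans hv.2⟩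
  have hfin : volume {v ∈ Set.Icc (0:ℝ) 1 | G v ≤ y} ≠ ⊤ := by
    refine ne_top_of_le_ne_top ?_ (measure_mono (sep_subset _ _))
    rw [Real.volume_Icc]
    exact ENNReal.ofReal_ne_top
  exact ENNReal.toReal_mono hfin (measure_mono hsub)

lemma rearr_le {G F : ℝ → ℝ} (hle : ∀ v ∈ Set.Icc (0:ℝ) 1, G v ≤ F v)
    {m M : ℝ} (hm : ∀ v ∈ Set.Icc (0:ℝ) 1, m ≤ G v) (hM : ∀ v ∈ Set.Icc (0:ℝ) 1, F v ≤ M)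
    {u : ℝ} (hu : u ∈ Set.Ioo (0:ℝ) 1) : rearr G u ≤ rearr F u := by
  have hsub : {y | u ≤ distF F y} ⊆ {y | u ≤ distF G y} :=
    fun y hy => le_trans hy (distF_le hle y)
  have hne : ({y | u ≤ distF F y}).Nonempty := by
    refine ⟨M, ?_⟩
    have hset : {v ∈ Set.Icc (0:ℝ) 1 | F v ≤ M} = Set.Icc (0:ℝ) 1 := by
      ext v
      simp only [Set.mem_sep_iff, and_iff_left_iff_imp]
      exact hM v
    show u ≤ distF F M
    rw [distF, hset, Real.volume_Icc, ENNReal.toReal_ofReal (by norm_num)]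
    norm_num
    exact hu.2.le
  have hbdd : BddBelow {y | u ≤ distF G y} := by
    refine ⟨m, fun y hy => ?_⟩
    by_contra hlt
    push_neg at hlt
    have hset : {v ∈ Set.Icc (0:ℝ) 1 | G v ≤ y} = ∅ := by
      ext v
      simp only [Set.mem_sep_iff, Set.mem_empty_iff_false, iff_false, not_and]
      intro hv
      exact not_le.mpr (lt_of_lt_of_le hlt (hm v hv))
    have h0 : distF G y = 0 := by rw [distF, hset]; simp
    have hy' : u ≤ distF G y := hy
    rw [h0] at hy'
    exact absurd hy' (not_le.mpr hu.1)
  exact csInf_le_csInf hbdd hne hsub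

lemma rearr_eq_self {F : ℝ → ℝ} (hFc : Continuous F)
    (hF : StrictMonoOn F (Set.Icc 0 1)) {u : ℝ} (hu : u ∈ Set.Ioo (0:ℝ) 1) :
    rearr F u = F u := by
  have huI : u ∈ Set.Icc (0:ℝ) 1 := ⟨hu.1.le, hu.2.le⟩
  have hmem : F u ∈ {y | u ≤ distF F y} := by
    have hset : {v ∈ Set.Icc (0:ℝ) 1 | F v ≤ F u} = Set.Icc 0 u := by
      ext v
      constructor
      · rintro ⟨hv, hFv⟩
        refine ⟨hv.1, ?_⟩
        by_contra hlt
        push_neg at hlt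
        exact absurd hFv (not_le.mpr (hF huI hv hlt))
      · intro hv
        have hv1 : v ∈ Set.Icc (0:ℝ) 1 := ⟨hv.1, hv.2.trans huI.2⟩
        exact ⟨hv1, hF.monotoneOn hv1 huI hv.2⟩
    show u ≤ distF F (F u)
    rw [distF, hset, Real.volume_Icc, ENNReal.toReal_ofReal (by linarith [hu.1])]
    simp
  have hlb : ∀ y ∈ {y | u ≤ distF F y}, F u ≤ y := by
    intro y hy
    by_contra hlt
    push_neg at hlt
    obtain ⟨η, hη, hball⟩ := Metric.continuousAt_iff.mp hFc.continuousAt (F u - y) (by linarith)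
    set u' : ℝ := max (u - η / 2) (u / 2) with hu'def
    have hu'lt : u' < u := by
      apply max_lt <;> [linarith; linarith [hu.1]]
    have hu'pos : 0 < u' := lt_of_lt_of_le (by linarith [hu.1]) (le_max_right _ _)
    have hdist : dist u' u < η := by
      rw [Real.dist_eq, abs_of_nonpos (by linarith)]
      have : u - η / 2 ≤ u' := le_max_left _ _
      linarith
    have hFu' : y < F u' := by
      have := hball hdist
      rw [Real.dist_eq] at this
      have h2 := abs_lt.mp this
      linarith [h2.1]
    have hsub : {v ∈ Set.Icc (0:ℝ) 1 | F v ≤ y} ⊆ Set.Icc 0 u' := by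
      rintro v ⟨hv, hFv⟩
      refine ⟨hv.1, ?_⟩
      by_contra hlt2
      push_neg at hlt2
      have hu'I : u' ∈ Set.Icc (0:ℝ) 1 := ⟨hu'pos.le, by linarith [hu.2]⟩
      exact absurd hFv (not_le.mpr (lt_trans hFu' (hF hu'I hv hlt2)))
    have hle : distF F y ≤ u' := by
      rw [distF]
      calc (volume {v ∈ Set.Icc (0:ℝ) 1 | F v ≤ y}).toReal
          ≤ (volume (Set.Icc (0:ℝ) u')).toReal := by
            apply ENNReal.toReal_mono
            · rw [Real.volume_Icc]; exact ENNReal.ofReal_ne_top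
            · exact measure_mono hsub
        _ = u' := by rw [Real.volume_Icc, ENNReal.toReal_ofReal (by linarith)]; ring
    have : u ≤ u' := le_trans hy hle
    linarith
  exact le_antisymm (csInf_le ⟨F u, hlb⟩ hmem) (le_csInf ⟨F u, hmem⟩ hlb)

/-- In the strictly increasing case the Hadamard derivative of the rearrangement
operator is the identity: `((Q + t·h_t)*(u) − Q(u))/t → h(u)` as `t → 0⁺`, uniformly
on compact subsets of `(0,1)`. -/
theorem rearr_hadamard_derivative_identity (Q : ℝ → ℝ)
    (hQ : ContDiff ℝ 1 Q) (hQ' : ∀ u ∈ Set.Icc (0:ℝ) 1, 0 < deriv Q u)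
    (h : ℝ → ℝ) (hh : Continuous h)
    (H : ℝ → ℝ → ℝ) (hHmeas : ∀ t, Measurable (H t))
    (hHlim : ∀ ε > (0:ℝ), ∃ δ > (0:ℝ), ∀ t ∈ Set.Ioo (0:ℝ) δ,
      ∀ u ∈ Set.Icc (0:ℝ) 1, |H t u - h u| ≤ ε) :
    ∀ K : Set ℝ, IsCompact K → K ⊆ Set.Ioo (0:ℝ) 1 →
      ∀ ε > (0:ℝ), ∃ δ > (0:ℝ), ∀ t ∈ Set.Ioo (0:ℝ) δ, ∀ u ∈ K,
        |(rearr (fun s => Q s + t * H t s) u - Q u) / t - h u| ≤ ε := by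
  intro K hK hKsub ε hε
  -- minimum of deriv Q on [0,1]
  have hQderiv : Continuous (deriv Q) := hQ.continuous_deriv le_rfl
  obtain ⟨x₀, hx₀I, hx₀min⟩ := isCompact_Icc.exists_isMinOn
    (Set.nonempty_Icc.mpr zero_le_one) hQderiv.continuousOn
  set c : ℝ := deriv Q x₀ with hcdef
  have hc : 0 < c := hQ' x₀ hx₀I
  set ε' : ℝ := ε / 3 with hε'def
  have hε' : 0 < ε' := by positivity
  -- polynomial approximation of h
  obtain ⟨p, hp⟩ := exists_polynomial_near_of_continuousOn 0 1 h hh.continuousOn ε' hε'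
  -- bound on derivative of p
  obtain ⟨L, hL⟩ := isCompact_Icc.exists_bound_of_continuousOn
    (f := fun x => Polynomial.eval x (Polynomial.derivative p))
    (Polynomial.continuous _).continuousOn
  have hL0 : 0 ≤ L := le_trans (norm_nonneg _) (hL 0 ⟨le_refl 0, zero_le_one⟩)
  obtain ⟨δ₁, hδ₁, hH⟩ := hHlim ε' hε'
  refine ⟨min δ₁ (c / (2 * (L + 1))), lt_min hδ₁ (by positivity), ?_⟩
  intro t ht u huK
  have hu : u ∈ Set.Ioo (0:ℝ) 1 := hKsub huK
  have huI : u ∈ Set.Icc (0:ℝ) 1 := ⟨hu.1.le, hu.2.le⟩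
  have ht0 : 0 < t := ht.1
  have htδ₁ : t < δ₁ := lt_of_lt_of_le ht.2 (min_le_left _ _)
  have htc : t < c / (2 * (L + 1)) := lt_of_lt_of_le ht.2 (min_le_right _ _)
  have htc' : t * (2 * (L + 1)) < c := (lt_div_iff₀ (by positivity)).mp htc
  have hHt : ∀ v ∈ Set.Icc (0:ℝ) 1, |H t v - h v| ≤ ε' := hH t ⟨ht0, htδ₁⟩
  -- strict monotonicity of the comparison functions
  have hsm : ∀ A : ℝ, StrictMonoOn (fun s => Q s + t * (Polynomial.eval s p + A))
      (Set.Icc (0:ℝ) 1) := by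
    intro A
    apply strictMonoOn_of_deriv_pos (convex_Icc 0 1)
    · exact (hQ.continuous.add (continuous_const.mul
        ((Polynomial.continuous p).add continuous_const))).continuousOn
    · intro x hx
      rw [interior_Icc] at hx
      have hxI : x ∈ Set.Icc (0:ℝ) 1 := Set.Ioo_subset_Icc_self hx
      have hQd : DifferentiableAt ℝ Q x := (hQ.differentiable one_ne_zero) x
      have hda : HasDerivAt (fun s => Q s + t * (Polynomial.eval s p + A))
          (deriv Q x + t * Polynomial.eval x (Polynomial.derivative p)) x :=
        hQd.hasDerivAt.add (((p.hasDerivAt x).add_const A).const_mul t)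
      rw [hda.deriv]
      have h1 : c ≤ deriv Q x := hx₀min hxI
      have h2 : |Polynomial.eval x (Polynomial.derivative p)| ≤ L := by
        have := hL x hxI; rwa [Real.norm_eq_abs] at this
      obtain ⟨h2a, h2b⟩ := abs_le.mp h2
      nlinarith
  have hsmP := hsm (2 * ε')
  have hsmM := hsm (-(2 * ε'))
  -- bounds on comparison functions
  obtain ⟨B₁, hB₁⟩ := isCompact_Icc.exists_bound_of_continuousOn
    (f := fun s => Q s + t * (Polynomial.eval s p + 2 * ε'))
    ((hQ.continuous.add (continuous_const.mul
      ((Polynomial.continuous p).add continuous_const))).continuousOn)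
  obtain ⟨B₂, hB₂⟩ := isCompact_Icc.exists_bound_of_continuousOn
    (f := fun s => Q s + t * (Polynomial.eval s p + -(2 * ε')))
    ((hQ.continuous.add (continuous_const.mul
      ((Polynomial.continuous p).add continuous_const))).continuousOn)
  have hB₁' : ∀ v ∈ Set.Icc (0:ℝ) 1, Q v + t * (Polynomial.eval v p + 2 * ε') ≤ B₁ := by
    intro v hv
    have := hB₁ v hv
    rw [Real.norm_eq_abs] at this
    linarith [(abs_le.mp this).2]
  have hB₂' : ∀ v ∈ Set.Icc (0:ℝ) 1, -B₂ ≤ Q v + t * (Polynomial.eval v p + -(2 * ε')) := by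
    intro v hv
    have := hB₂ v hv
    rw [Real.norm_eq_abs] at this
    linarith [(abs_le.mp this).1]
  -- sandwich
  have hup : ∀ v ∈ Set.Icc (0:ℝ) 1,
      Q v + t * H t v ≤ Q v + t * (Polynomial.eval v p + 2 * ε') := by
    intro v hv
    have h1 := (abs_le.mp (hHt v hv)).2
    have h2 := (abs_lt.mp (hp v hv)).1
    nlinarith
  have hlo : ∀ v ∈ Set.Icc (0:ℝ) 1,
      Q v + t * (Polynomial.eval v p + -(2 * ε')) ≤ Q v + t * H t v := by
    intro v hv
    have h1 := (abs_le.mp (hHt v hv)).1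
    have h2 := (abs_lt.mp (hp v hv)).2
    nlinarith
  have hGlo : ∀ v ∈ Set.Icc (0:ℝ) 1, -B₂ ≤ Q v + t * H t v :=
    fun v hv => le_trans (hB₂' v hv) (hlo v hv)
  have hGup : ∀ v ∈ Set.Icc (0:ℝ) 1, Q v + t * H t v ≤ B₁ :=
    fun v hv => le_trans (hup v hv) (hB₁' v hv)
  have hcontP : Continuous (fun s => Q s + t * (Polynomial.eval s p + 2 * ε')) :=
    hQ.continuous.add (continuous_const.mul ((Polynomial.continuous p).add continuous_const))
  have hcontM : Continuous (fun s => Q s + t * (Polynomial.eval s p + -(2 * ε'))) :=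
    hQ.continuous.add (continuous_const.mul ((Polynomial.continuous p).add continuous_const))
  have hupper : rearr (fun s => Q s + t * H t s) u ≤ Q u + t * (Polynomial.eval u p + 2 * ε') := by
    calc rearr (fun s => Q s + t * H t s) u
        ≤ rearr (fun s => Q s + t * (Polynomial.eval s p + 2 * ε')) u :=
          rearr_le hup hGlo hB₁' hu
      _ = Q u + t * (Polynomial.eval u p + 2 * ε') := rearr_eq_self hcontP hsmP hu
  have hlower : Q u + t * (Polynomial.eval u p + -(2 * ε')) ≤
      rearr (fun s => Q s + t * H t s) u := by
    calc Q u + t * (Polynomial.eval u p + -(2 * ε'))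
        = rearr (fun s => Q s + t * (Polynomial.eval s p + -(2 * ε'))) u :=
          (rearr_eq_self hcontM hsmM hu).symm
      _ ≤ rearr (fun s => Q s + t * H t s) u := rearr_le hlo hB₂' hGup hu
  set rG := rearr (fun s => Q s + t * H t s) u with hrGdef
  have e1 : (rG - Q u) / t ≤ Polynomial.eval u p + 2 * ε' := by
    rw [div_le_iff₀ ht0]
    nlinarith
  have e2 : Polynomial.eval u p + -(2 * ε') ≤ (rG - Q u) / t := by
    rw [le_div_iff₀ ht0]
    nlinarith
  have hpu := abs_lt.mp (hp u huI)
  rw [abs_le]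
  constructor
  · rw [hε'def] at e2 hpu
    linarith [hpu.2]
  · rw [hε'def] at e1 hpu
    linarith [hpu.1]
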